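/- Let M be an R-module and let F = R/m be the residue field of R, regarded as an R-module. Then Tor_3^R(M, F) is isomorphic, as an F-vector space, to the quotient K/I, where K = {(x, y) ∈ M × M : Q²·x = 0 and V·x + Q·y = 0} and I = {(Q·a, V·a + Q²·b) : a, b ∈ M}. -/

import Mathlib

set_option maxHeartbeats 1000000
set_option synthInstance.maxHeartbeats 1000000


open Polynomial CategoryTheory

noncomputable section

/-- The field `F = ℤ/2ℤ`. -/
abbrev Fld := ZMod 2

/-- The polynomial ring `F[[V]][Q]` (polynomials in `Q` over the power series ring `F[[V]]`). -/
abbrev Rpoly := Polynomial (PowerSeries Fld)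

/-- The ring `R = F[[V]][Q]/(Q³)`. -/
abbrev Rring := Rpoly ⧸ Ideal.span ({(X : Rpoly) ^ 3} : Set Rpoly)

/-- `Q`, the image in `R` of the polynomial variable. -/
def Qe : Rring := Ideal.Quotient.mk (Ideal.span ({(X : Rpoly) ^ 3} : Set Rpoly)) (X : Rpoly)

/-- `V`, the image in `R` of the power series variable. -/
def Ve : Rring := Ideal.Quotient.mk (Ideal.span ({(X : Rpoly) ^ 3} : Set Rpoly)) (C PowerSeries.X)
/-- The maximal ideal `m = (Q, V)` of `R`. -/
def mIdeal : Ideal Rring := Ideal.span {Qe, Ve}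

/-- The residue field `F = R/m`, regarded as an `R`-module. -/
def resF : ModuleCat Rring := ModuleCat.of Rring (Rring ⧸ mIdeal)

/-- Scalars commute with themselves: needed to form `R`-scalar multiples of linear maps. -/
instance (M : Type) [AddCommGroup M] [Module Rring M] : SMulCommClass Rring Rring M :=
  smulCommClass_self Rring M

/-- `K = {(x, y) ∈ M × M : Q²·x = 0 and V·x + Q·y = 0}`. -/
def Ksub (M : Type) [AddCommGroup M] [Module Rring M] : Submodule Rring (M × M) :=
  LinearMap.ker (LinearMap.prod ((Qe ^ 2) • LinearMap.fst Rring M M)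
    (Ve • LinearMap.fst Rring M M + Qe • LinearMap.snd Rring M M))

/-- `I = {(Q·a, V·a + Q²·b) : a, b ∈ M}`. -/
def Isub (M : Type) [AddCommGroup M] [Module Rring M] : Submodule Rring (M × M) :=
  LinearMap.range (LinearMap.prod (Qe • LinearMap.fst Rring M M)
    (Ve • LinearMap.fst Rring M M + (Qe ^ 2) • LinearMap.snd Rring M M))

/-- Instance search no longer finds `CommRing Rring` through the abbreviations; give Mathlib's own. -/
instance : CommRing Rring := @Ideal.Quotient.commRing Rpoly Polynomial.commRing _

abbrev S := PowerSeries Fld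

lemma Q3 : Qe ^ 3 = 0 := by
  rw [Qe, ← map_pow, Ideal.Quotient.eq_zero_iff_mem]
  exact Ideal.subset_span rfl

def φ2 : Fld →+* Rring :=
  (Ideal.Quotient.mk _).comp ((C : S →+* Rpoly).comp (PowerSeries.C (R := Fld)))

lemma char2 : (2 : Rring) = 0 := by
  have h : (2 : Rring) = φ2 (2 : Fld) := by rw [map_ofNat]
  rw [h, show (2 : Fld) = 0 by decide, map_zero]

lemma smul_def' (c : S) (p : Rpoly) :
    c • (Ideal.Quotient.mk (Ideal.span ({(X : Rpoly) ^ 3} : Set Rpoly)) p)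
      = Ideal.Quotient.mk (Ideal.span ({(X : Rpoly) ^ 3} : Set Rpoly)) (C c * p) := by
  rw [← smul_eq_C_mul]; rfl

def rep (c₀ c₁ c₂ : S) : Rpoly := C c₀ + C c₁ * X + C c₂ * X^2

lemma mk_rep (c₀ c₁ c₂ : S) :
    Ideal.Quotient.mk (Ideal.span ({(X : Rpoly) ^ 3} : Set Rpoly)) (rep c₀ c₁ c₂)
      = c₀ • 1 + c₁ • Qe + c₂ • Qe^2 := by
  rw [rep, map_add, map_add, Qe, ← map_pow,
    show (1:Rring) = Ideal.Quotient.mk (Ideal.span ({(X : Rpoly) ^ 3} : Set Rpoly)) 1 from rfl,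
    smul_def', smul_def', smul_def', mul_one]

-- spanning
lemma spanL (r : Rring) : ∃ c₀ c₁ c₂ : S, r = c₀ • 1 + c₁ • Qe + c₂ • Qe^2 := by
  obtain ⟨p, rfl⟩ := Ideal.Quotient.mk_surjective (I := Ideal.span ({(X : Rpoly) ^ 3} : Set Rpoly)) r
  induction p using Polynomial.induction_on' with
  | add p q hp hq =>
    obtain ⟨a₀, a₁, a₂, ha⟩ := hp
    obtain ⟨b₀, b₁, b₂, hb⟩ := hq
    refine ⟨a₀ + b₀, a₁ + b₁, a₂ + b₂, ?_⟩
    rw [map_add, ha, hb]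
    simp only [add_smul]
    ring
  | monomial n a =>
    rcases n with _ | _ | _ | n
    · refine ⟨a, 0, 0, ?_⟩
      rw [← C_mul_X_pow_eq_monomial, show (1:Rring) = Ideal.Quotient.mk (Ideal.span ({(X : Rpoly) ^ 3} : Set Rpoly)) 1 from rfl]
      simp only [zero_smul, add_zero, smul_def', mul_one, pow_zero]
    · refine ⟨0, a, 0, ?_⟩
      rw [← C_mul_X_pow_eq_monomial, Qe]
      simp only [zero_smul, add_zero, zero_add, smul_def', pow_one]
    · refine ⟨0, 0, a, ?_⟩
      rw [← C_mul_X_pow_eq_monomial, Qe, ← map_pow]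
      simp only [zero_smul, add_zero, zero_add, smul_def']
    · refine ⟨0, 0, 0, ?_⟩
      have : (monomial (n+3) a : Rpoly) = C a * X^n * X^3 := by
        rw [← C_mul_X_pow_eq_monomial]; ring
      rw [this]
      simp only [map_mul]
      have h3 : Ideal.Quotient.mk (Ideal.span ({(X : Rpoly) ^ 3} : Set Rpoly)) ((X:Rpoly)^3) = 0 := by
        rw [Ideal.Quotient.eq_zero_iff_mem]
        exact Ideal.subset_span rfl
      rw [h3]
      simp

lemma degree_rep_lt (c₀ c₁ c₂ : S) : (rep c₀ c₁ c₂).degree < 3 := by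
  have h : (rep c₀ c₁ c₂) = C c₂ * X^2 + C c₁ * X + C c₀ := by rw [rep]; ring
  rw [h]
  exact lt_of_le_of_lt (degree_quadratic_le) (by norm_num)

-- independence
lemma indepL (c₀ c₁ c₂ : S) (h : c₀ • 1 + c₁ • Qe + c₂ • Qe^2 = 0) :
    c₀ = 0 ∧ c₁ = 0 ∧ c₂ = 0 := by
  rw [← mk_rep] at h
  have h2 : (rep c₀ c₁ c₂) %ₘ ((X:Rpoly)^3) = 0 := by
    have := AdjoinRoot.modByMonicHom_mk (monic_X_pow 3) (rep c₀ c₁ c₂)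
    rw [show AdjoinRoot.mk ((X:Rpoly)^3) (rep c₀ c₁ c₂) = 0 from h] at this
    rw [← this, map_zero]
  rw [(modByMonic_eq_self_iff (monic_X_pow 3)).2 (by simpa using degree_rep_lt c₀ c₁ c₂)] at h2
  refine ⟨?_, ?_, ?_⟩
  · have := congrArg (fun p => Polynomial.coeff p 0) h2
    simpa [rep] using this
  · have := congrArg (fun p => Polynomial.coeff p 1) h2
    simpa [rep] using this
  · have := congrArg (fun p => Polynomial.coeff p 2) h2
    simpa [rep] using this


lemma Schar2 : (2 : S) = 0 := by
  have h : (2 : S) = PowerSeries.C (R := Fld) (2 : Fld) := by rw [map_ofNat]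
  rw [h, show (2:Fld) = 0 by decide, map_zero]

lemma Sneg (x : S) : -x = x :=
  neg_eq_of_add_eq_zero_left (by rw [show x + x = 2 * x by ring, Schar2, zero_mul])

lemma Rzero_mul (r : Rring) : 0 * r = 0 := zero_mul r
lemma Rmul_one (r : Rring) : r * 1 = r := mul_one r
lemma Rone_mul (r : Rring) : 1 * r = r := one_mul r

lemma VX : Ve = (PowerSeries.X : S) • (1:Rring) := by
  rw [Ve, show (1:Rring) = Ideal.Quotient.mk (Ideal.span ({(X : Rpoly) ^ 3} : Set Rpoly)) 1 from rfl,
    smul_def', mul_one]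

lemma Ve_mul (r : Rring) : Ve * r = (PowerSeries.X : S) • r := by
  rw [VX, smul_mul_assoc, Rone_mul]

lemma Q4 : Qe ^ 4 = 0 := by rw [pow_succ, Q3, Rzero_mul]

lemma mulQ (a₀ a₁ a₂ : S) : Qe * (a₀•1 + a₁•Qe + a₂•Qe^2) = a₀•Qe + a₁•Qe^2 := by
  simp only [mul_add, mul_smul_comm]
  rw [Rmul_one, show Qe * Qe = Qe^2 by ring, show Qe * Qe^2 = Qe^3 by ring, Q3, smul_zero, add_zero]

lemma mulQ2 (a₀ a₁ a₂ : S) : Qe^2 * (a₀•1 + a₁•Qe + a₂•Qe^2) = a₀•Qe^2 := by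
  simp only [mul_add, mul_smul_comm]
  rw [Rmul_one, show Qe^2 * Qe = Qe^3 by ring, show Qe^2 * Qe^2 = Qe^4 by ring, Q3, Q4, smul_zero, smul_zero,
    add_zero, add_zero]

lemma mulV (a₀ a₁ a₂ : S) : Ve * (a₀•1 + a₁•Qe + a₂•Qe^2)
    = (PowerSeries.X * a₀)•1 + (PowerSeries.X * a₁)•Qe + (PowerSeries.X * a₂)•Qe^2 := by
  rw [Ve_mul]
  simp only [smul_add, smul_smul]

lemma Xreg {x : S} (h : PowerSeries.X * x = 0) : x = 0 := by
  rcases mul_eq_zero.1 h with h' | h'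
  · exact absurd h' PowerSeries.X_ne_zero
  · exact h'

lemma addzero {x y : S} (h : x + y = 0) : y = x := by
  have h2 := neg_eq_of_add_eq_zero_right h
  rw [Sneg] at h2
  exact h2.symm

-- Exactness at odd degrees (both E1 and E3)
lemma E1 {a b : Rring} (h : Ve * a + Qe * b = 0) :
    ∃ c d : Rring, Qe * c = a ∧ Ve * c + Qe^2 * d = b := by
  obtain ⟨a₀, a₁, a₂, rfl⟩ := spanL a
  obtain ⟨b₀, b₁, b₂, rfl⟩ := spanL b
  rw [mulV, mulQ] at h
  have h' : (PowerSeries.X * a₀)•(1:Rring) + (PowerSeries.X * a₁ + b₀)•Qe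
      + (PowerSeries.X * a₂ + b₁)•Qe^2 = 0 := by
    simp only [add_smul]; rw [← h]; abel
  obtain ⟨e₀, e₁, e₂⟩ := indepL _ _ _ h'
  have ha₀ : a₀ = 0 := Xreg e₀
  have hb₀ : b₀ = PowerSeries.X * a₁ := addzero e₁
  have hb₁ : b₁ = PowerSeries.X * a₂ := addzero e₂
  refine ⟨a₁•1 + a₂•Qe + (0:S)•Qe^2, b₂•1 + (0:S)•Qe + (0:S)•Qe^2, ?_, ?_⟩
  · rw [mulQ, ha₀, zero_smul, zero_add]
  · rw [mulV, mulQ2, hb₀, hb₁, mul_zero]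
    simp only [zero_smul, add_zero, zero_add]

lemma E2 {a b : Rring} (h1 : Qe * a = 0) (h2 : Ve * a + Qe^2 * b = 0) :
    ∃ c d : Rring, Qe^2 * c = a ∧ Ve * c + Qe * d = b := by
  obtain ⟨a₀, a₁, a₂, rfl⟩ := spanL a
  obtain ⟨b₀, b₁, b₂, rfl⟩ := spanL b
  rw [mulQ] at h1
  have h1' : (0:S)•(1:Rring) + a₀•Qe + a₁•Qe^2 = 0 := by rw [zero_smul, zero_add]; exact h1
  obtain ⟨-, ha₀, ha₁⟩ := indepL _ _ _ h1'
  rw [mulV, mulQ2] at h2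
  have h2' : (PowerSeries.X * a₀)•(1:Rring) + (PowerSeries.X * a₁)•Qe
      + (PowerSeries.X * a₂ + b₀)•Qe^2 = 0 := by
    simp only [add_smul]; rw [← h2]; abel
  obtain ⟨-, -, e₂⟩ := indepL _ _ _ h2'
  have hb₀ : b₀ = PowerSeries.X * a₂ := addzero e₂
  refine ⟨a₂•1 + (0:S)•Qe + (0:S)•Qe^2, b₁•1 + b₂•Qe + (0:S)•Qe^2, ?_, ?_⟩
  · rw [mulQ2, ha₀, ha₁]
    simp only [zero_smul, zero_add]
  · rw [mulV, mulQ, hb₀, mul_zero]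
    simp only [zero_smul, add_zero, zero_add]
    abel


def fA (N : Type) [AddCommGroup N] [Module Rring N] : N × N →ₗ[Rring] N × N :=
  LinearMap.prod (Qe • LinearMap.fst Rring N N)
    (Ve • LinearMap.fst Rring N N + (Qe ^ 2) • LinearMap.snd Rring N N)

def fB (N : Type) [AddCommGroup N] [Module Rring N] : N × N →ₗ[Rring] N × N :=
  LinearMap.prod ((Qe ^ 2) • LinearMap.fst Rring N N)
    (Ve • LinearMap.fst Rring N N + Qe • LinearMap.snd Rring N N)

def d1 : Rring × Rring →ₗ[Rring] Rring :=
  Ve • LinearMap.fst Rring Rring Rring + Qe • LinearMap.snd Rring Rring Rring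

lemma fA_apply (N : Type) [AddCommGroup N] [Module Rring N] (x : N × N) :
    fA N x = (Qe • x.1, Ve • x.1 + (Qe ^ 2) • x.2) := rfl

lemma fB_apply (N : Type) [AddCommGroup N] [Module Rring N] (x : N × N) :
    fB N x = ((Qe ^ 2) • x.1, Ve • x.1 + Qe • x.2) := rfl

lemma d1_apply (x : Rring × Rring) : d1 x = Ve • x.1 + Qe • x.2 := rfl

lemma comp_d1_fA : d1.comp (fA Rring) = 0 := by
  apply LinearMap.ext
  rintro ⟨a, b⟩
  simp only [LinearMap.comp_apply, fA_apply, d1_apply, LinearMap.zero_apply, smul_eq_mul]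
  linear_combination (Ve * Qe * a) * char2 + b * Q3

lemma comp_fA_fB : (fA Rring).comp (fB Rring) = 0 := by
  apply LinearMap.ext
  rintro ⟨a, b⟩
  simp only [LinearMap.comp_apply, fA_apply, fB_apply, LinearMap.zero_apply, smul_eq_mul]
  apply Prod.ext
  · show Qe * (Qe^2 * a) = 0
    linear_combination a * Q3
  · show Ve * (Qe^2 * a) + Qe^2 * (Ve * a + Qe * b) = 0
    linear_combination (Ve * Qe^2 * a) * char2 + b * Q3

lemma comp_fB_fA : (fB Rring).comp (fA Rring) = 0 := by
  apply LinearMap.ext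
  rintro ⟨a, b⟩
  simp only [LinearMap.comp_apply, fA_apply, fB_apply, LinearMap.zero_apply, smul_eq_mul]
  apply Prod.ext
  · show Qe^2 * (Qe * a) = 0
    linear_combination a * Q3
  · show Ve * (Qe * a) + Qe * (Ve * a + Qe^2 * b) = 0
    linear_combination (Ve * Qe * a) * char2 + b * Q3

abbrev RM : ModuleCat Rring := ModuleCat.of Rring Rring
abbrev RM2 : ModuleCat Rring := ModuleCat.of Rring (Rring × Rring)

def Xc : ℕ → ModuleCat Rring
  | 0 => RM
  | _ + 1 => RM2

def dc : ∀ n : ℕ, Xc (n + 1) ⟶ Xc n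
  | 0 => ModuleCat.ofHom d1
  | n + 1 => if n % 2 = 0 then ModuleCat.ofHom (fA Rring) else ModuleCat.ofHom (fB Rring)

lemma dc_zero : dc 0 = ModuleCat.ofHom d1 := rfl

lemma dc_even (n : ℕ) (h : n % 2 = 0) : dc (n + 1) = ModuleCat.ofHom (fA Rring) := by
  simp [dc, h]; rfl

lemma dc_odd (n : ℕ) (h : n % 2 = 1) : dc (n + 1) = ModuleCat.ofHom (fB Rring) := by
  simp [dc, h]; rfl

lemma dsq : ∀ n : ℕ, dc (n + 1) ≫ dc n = 0 := by
  intro n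
  match n with
  | 0 =>
    rw [dc_zero, dc_even 0 rfl]
    show ModuleCat.ofHom (d1.comp (fA Rring)) = 0
    rw [comp_d1_fA]; rfl
  | n + 1 =>
    rcases Nat.even_or_odd n with he | ho
    · have h1 : n % 2 = 0 := Nat.even_iff.1 he
      have h2 : (n + 1) % 2 = 1 := by omega
      rw [dc_even n h1, dc_odd (n+1) h2]
      show ModuleCat.ofHom ((fA Rring).comp (fB Rring)) = 0
      rw [comp_fA_fB]; rfl
    · have h1 : n % 2 = 1 := Nat.odd_iff.1 ho
      have h2 : (n + 1) % 2 = 0 := by omega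
      rw [dc_odd n h1, dc_even (n+1) h2]
      show ModuleCat.ofHom ((fB Rring).comp (fA Rring)) = 0
      rw [comp_fB_fA]; rfl

def theComplex : ChainComplex (ModuleCat Rring) ℕ := ChainComplex.of Xc dc dsq

def aug : Xc 0 ⟶ resF := ModuleCat.ofHom mIdeal.mkQ

lemma theComplex_d (n : ℕ) : theComplex.d (n + 1) n = dc n := ChainComplex.of_d _ _ _

lemma aug_cond : theComplex.d 1 0 ≫ aug = 0 := by
  rw [theComplex_d, dc_zero]
  apply ModuleCat.hom_ext
  apply LinearMap.ext
  rintro ⟨a, b⟩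
  show mIdeal.mkQ (d1 (a, b)) = 0
  rw [d1_apply]
  simp only [Submodule.mkQ_apply, Submodule.Quotient.mk_eq_zero]
  rw [mIdeal]
  rw [Ideal.mem_span_pair]
  exact ⟨b, a, by rw [smul_eq_mul, smul_eq_mul]; ring⟩

instance projRM : Projective RM := ModuleCat.projective_of_free (Module.Basis.singleton Unit Rring)

instance projRM2 : Projective RM2 :=
  ModuleCat.projective_of_free ((Module.Basis.singleton Unit Rring).prod (Module.Basis.singleton Unit Rring))

instance projXc (n : ℕ) : Projective (theComplex.X n) := by
  cases n with
  | zero => exact projRM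
  | succ n => exact projRM2

lemma exact_fA_d1 (x : Rring × Rring) (hx : d1 x = 0) : ∃ y, fA Rring y = x := by
  obtain ⟨a, b⟩ := x
  rw [d1_apply] at hx
  simp only [smul_eq_mul] at hx
  obtain ⟨c, d, h1, h2⟩ := E1 hx
  refine ⟨(c, d), ?_⟩
  rw [fA_apply]
  simp only [smul_eq_mul]
  exact Prod.ext h1 h2

lemma exact_fB_fA (x : Rring × Rring) (hx : fA Rring x = 0) : ∃ y, fB Rring y = x := by
  obtain ⟨a, b⟩ := x
  rw [fA_apply] at hx
  simp only [smul_eq_mul] at hx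
  obtain ⟨h1, h2⟩ := Prod.ext_iff.1 hx
  obtain ⟨c, d, g1, g2⟩ := E2 h1 h2
  refine ⟨(c, d), ?_⟩
  rw [fB_apply]
  simp only [smul_eq_mul]
  exact Prod.ext g1 g2

lemma exact_fA_fB (x : Rring × Rring) (hx : fB Rring x = 0) : ∃ y, fA Rring y = x := by
  obtain ⟨a, b⟩ := x
  rw [fB_apply] at hx
  simp only [smul_eq_mul] at hx
  obtain ⟨-, h2⟩ := Prod.ext_iff.1 hx
  obtain ⟨c, d, g1, g2⟩ := E1 h2
  refine ⟨(c, d), ?_⟩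
  rw [fA_apply]
  simp only [smul_eq_mul]
  exact Prod.ext g1 g2

lemma exactSucc (n : ℕ) : theComplex.ExactAt (n + 1) := by
  rw [HomologicalComplex.exactAt_iff' _ (n + 2) (n + 1) n (by simp) (by simp)]
  rw [ShortComplex.moduleCat_exact_iff]
  dsimp [HomologicalComplex.sc', HomologicalComplex.shortComplexFunctor']
  simp only [theComplex_d]
  match n with
  | 0 =>
    rw [dc_zero, dc_even 0 rfl]
    exact fun x hx => exact_fA_d1 x hx
  | n + 1 =>
    rcases Nat.even_or_odd n with he | ho
    · have h1 : n % 2 = 0 := Nat.even_iff.1 he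
      have h2 : (n + 1) % 2 = 1 := by omega
      rw [dc_even n h1, dc_odd (n + 1) h2]
      exact fun x hx => exact_fB_fA x hx
    · have h1 : n % 2 = 1 := Nat.odd_iff.1 ho
      have h2 : (n + 1) % 2 = 0 := by omega
      rw [dc_odd n h1, dc_even (n + 1) h2]
      exact fun x hx => exact_fA_fB x hx

lemma exact_aug (x : Rring) (hx : aug x = 0) : ∃ y, d1 y = x := by
  have hmem : x ∈ mIdeal := by
    have hx' : Submodule.Quotient.mk (p := mIdeal) x = 0 := hx
    exact (Submodule.Quotient.mk_eq_zero _).1 hx'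
  rw [mIdeal, Ideal.mem_span_pair] at hmem
  obtain ⟨u, v, huv⟩ := hmem
  refine ⟨(v, u), ?_⟩
  rw [d1_apply]
  simp only [smul_eq_mul]
  rw [← huv]; ring

lemma d1_aug : ModuleCat.ofHom d1 ≫ aug = 0 := by
  rw [← dc_zero, ← theComplex_d]; exact aug_cond

def augSC : ShortComplex (ModuleCat Rring) := ShortComplex.mk (ModuleCat.ofHom d1) aug d1_aug

lemma augSC_exact_epi : augSC.Exact ∧ Epi augSC.g := by
  constructor
  · rw [ShortComplex.moduleCat_exact_iff]
    exact fun x hx => exact_aug x hx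
  · show Epi (aug)
    rw [ModuleCat.epi_iff_surjective]
    exact Submodule.mkQ_surjective mIdeal

def theRes : ProjectiveResolution resF where
  complex := theComplex
  projective := projXc
  π := (ChainComplex.toSingle₀Equiv theComplex resF).symm ⟨aug, aug_cond⟩
  quasiIso := ⟨fun n => by
    cases n with
    | zero =>
      rw [ChainComplex.quasiIsoAt₀_iff, ShortComplex.quasiIso_iff_of_zeros']
      · refine (ShortComplex.exact_and_epi_g_iff_of_iso
          (S₂ := augSC) ?_).2 augSC_exact_epi
        exact ShortComplex.isoMk (Iso.refl _) (Iso.refl _) (Iso.refl _)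
          (by simp [augSC, theComplex_d, dc_zero]; rfl) (by simp [augSC]; rfl)
      all_goals rfl
    | succ n =>
      rw [quasiIsoAt_iff_exactAt']
      · exact exactSucc n
      · apply ChainComplex.exactAt_succ_single_obj⟩

-- ============ Chunk 4 ============
section TorPart
open MonoidalCategory

section Bridges
variable {N : Type} [AddCommGroup N] [Module Rring N]
lemma bsmul_add (r : Rring) (x y : N) : r • (x + y) = r • x + r • y := smul_add r x y
lemma bsmul_smul (r s : Rring) (x : N) : r • s • x = (r * s) • x := smul_smul r s x
lemma badd_smul (r s : Rring) (x : N) : (r + s) • x = r • x + s • x := add_smul r s x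
lemma bzero_smul (x : N) : (0 : Rring) • x = 0 := by
  have h := badd_smul 0 0 x
  rw [add_zero] at h
  exact add_eq_right.mp h.symm
end Bridges

variable (M : Type) [AddCommGroup M] [Module Rring M]

lemma Ksub_eq : Ksub M = LinearMap.ker (fB M) := rfl
lemma Isub_eq : Isub M = LinearMap.range (fA M) := rfl

lemma comp_fB_fA' (N : Type) [AddCommGroup N] [Module Rring N] :
    (fB N).comp (fA N) = 0 := by
  have hz1 : Qe ^ 2 * Qe = 0 := by linear_combination Q3
  have hz2 : Qe * Qe ^ 2 = 0 := by linear_combination Q3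
  have hz3 : Ve * Qe + Qe * Ve = 0 := by linear_combination (Ve * Qe) * char2
  apply LinearMap.ext
  rintro ⟨a, b⟩
  simp only [LinearMap.comp_apply, fA_apply, fB_apply, LinearMap.zero_apply]
  refine Prod.ext ?_ ?_
  · show (Qe ^ 2) • (Qe • a) = (0 : N × N).1
    rw [bsmul_smul, hz1, bzero_smul]; rfl
  · show Ve • (Qe • a) + Qe • (Ve • a + (Qe ^ 2) • b) = (0 : N × N).2
    rw [bsmul_add, bsmul_smul, bsmul_smul, bsmul_smul, hz2, bzero_smul, add_zero, ← badd_smul,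
      hz3, bzero_smul]; rfl

def Mc : ModuleCat Rring := ModuleCat.of Rring M

def Ft : ModuleCat Rring ⥤ ModuleCat Rring := (tensoringLeft (ModuleCat Rring)).obj (Mc M)

instance : (Ft M).Additive := by unfold Ft; infer_instance

def Tc : ChainComplex (ModuleCat Rring) ℕ :=
  ((Ft M).mapHomologicalComplex (ComplexShape.down ℕ)).obj theComplex

def scM : ShortComplex (ModuleCat Rring) :=
  ShortComplex.mk (ModuleCat.ofHom (fA M)) (ModuleCat.ofHom (fB M))
    (by show ModuleCat.ofHom ((fB M).comp (fA M)) = 0; rw [comp_fB_fA']; rfl)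

def tEquiv : (TensorProduct Rring M (Rring × Rring)) ≃ₗ[Rring] M × M :=
  (TensorProduct.prodRight Rring Rring M Rring Rring).trans
    ((TensorProduct.rid Rring M).prodCongr (TensorProduct.rid Rring M))

lemma tEquiv_tmul (x : M) (a b : Rring) :
    tEquiv M (x ⊗ₜ (a, b)) = (a • x, b • x) := by
  simp [tEquiv]

def μiso : (Ft M).obj RM2 ≅ ModuleCat.of Rring (M × M) :=
  (tEquiv M).toModuleIso

lemma sq1 : (μiso M).hom ≫ (scM M).f = ((Tc M).sc' 4 3 2).f ≫ (μiso M).hom := by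
  rw [show ((Tc M).sc' 4 3 2).f = (Ft M).map (theComplex.d 4 3) from rfl,
    theComplex_d, dc_even 2 rfl]
  have h : (fA M).comp (tEquiv M).toLinearMap
      = ((tEquiv M).toLinearMap).comp (TensorProduct.map LinearMap.id (fA Rring)) := by
    apply TensorProduct.ext'
    rintro x ⟨a, b⟩
    show fA M ((tEquiv M) (x ⊗ₜ (a, b)))
        = (tEquiv M) (TensorProduct.map LinearMap.id (fA Rring) (x ⊗ₜ (a, b)))
    rw [TensorProduct.map_tmul, tEquiv_tmul]
    rw [show LinearMap.id x = x from rfl, fA_apply, tEquiv_tmul, fA_apply]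
    refine (Prod.ext ?_ ?_).symm
    · show (Qe • a) • x = Qe • a • x
      rw [smul_eq_mul, ← bsmul_smul]
    · show (Ve • a + (Qe ^ 2) • b) • x = Ve • a • x + (Qe ^ 2) • b • x
      rw [smul_eq_mul, smul_eq_mul, badd_smul, ← bsmul_smul, ← bsmul_smul]
  exact ModuleCat.hom_ext h

lemma sq2 : (μiso M).hom ≫ (scM M).g = ((Tc M).sc' 4 3 2).g ≫ (μiso M).hom := by
  rw [show ((Tc M).sc' 4 3 2).g = (Ft M).map (theComplex.d 3 2) from rfl,
    theComplex_d, dc_odd 1 rfl]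
  have h : (fB M).comp (tEquiv M).toLinearMap
      = ((tEquiv M).toLinearMap).comp (TensorProduct.map LinearMap.id (fB Rring)) := by
    apply TensorProduct.ext'
    rintro x ⟨a, b⟩
    show fB M ((tEquiv M) (x ⊗ₜ (a, b)))
        = (tEquiv M) (TensorProduct.map LinearMap.id (fB Rring) (x ⊗ₜ (a, b)))
    rw [TensorProduct.map_tmul, tEquiv_tmul]
    rw [show LinearMap.id x = x from rfl, fB_apply, tEquiv_tmul, fB_apply]
    refine (Prod.ext ?_ ?_).symm
    · show ((Qe ^ 2) • a) • x = (Qe ^ 2) • a • x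
      rw [smul_eq_mul, ← bsmul_smul]
    · show (Ve • a + Qe • b) • x = Ve • a • x + Qe • b • x
      rw [smul_eq_mul, smul_eq_mul, badd_smul, ← bsmul_smul, ← bsmul_smul]
  exact ModuleCat.hom_ext h

def scIso : (Tc M).sc' 4 3 2 ≅ scM M :=
  ShortComplex.isoMk (μiso M) (μiso M) (μiso M) (sq1 M) (sq2 M)

def homologyIsoA : (Tc M).homology 3 ≅ (scM M).homology :=
  ((Tc M).homologyIsoSc' 4 3 2 (by simp) (by simp)) ≪≫ ShortComplex.homologyMapIso (scIso M)

def bigIso : (((Tor (ModuleCat Rring) 3).obj (Mc M)).obj resF) ≅ (scM M).moduleCatLeftHomologyData.H :=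
  (theRes.isoLeftDerivedObj (Ft M) 3) ≪≫ homologyIsoA M ≪≫ (scM M).moduleCatHomologyIso

lemma rangeEq : (LinearMap.range (scM M).moduleCatToCycles : Submodule Rring (Ksub M))
    = Submodule.comap (Ksub M).subtype (Isub M) := by
  ext z
  constructor
  · rintro ⟨w, rfl⟩
    exact ⟨w, rfl⟩
  · rintro ⟨w, hw⟩
    exact ⟨w, Subtype.ext hw⟩

theorem torMain (M : Type) [AddCommGroup M] [Module Rring M] :
    Nonempty ((((Tor (ModuleCat Rring) 3).obj (ModuleCat.of Rring M)).obj resF) ≃+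
      (↥(Ksub M) ⧸ Submodule.comap (Ksub M).subtype (Isub M))) := by
  refine ⟨AddEquiv.trans ?_ ((Submodule.quotEquivOfEq _ _ (rangeEq M)).toAddEquiv)⟩
  exact (bigIso M).toLinearEquiv.toAddEquiv


end TorPart

/-- `Tor₃^R(M, F)` is isomorphic, as an `F`-vector space, to `K/I`. -/
theorem stmt8 (M : Type) [AddCommGroup M] [Module Rring M] :
    Nonempty ((((Tor (ModuleCat Rring) 3).obj (ModuleCat.of Rring M)).obj resF) ≃+
      (↥(Ksub M) ⧸ Submodule.comap (Ksub M).subtype (Isub M))) :=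
  torMain M
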